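/- Let A be an invertible symmetric n₁×n₁ real matrix, C an invertible symmetric n₂×n₂ real matrix, B a g×n₁ real matrix and D a g×n₂ real matrix, and let M be the block matrix [[A, Bᵀ, 0, 0],[B, B·A⁻¹·Bᵀ, -I, 0],[0, -I, D·C⁻¹·Dᵀ, D],[0, 0, Dᵀ, C]]. Then M is congruent, via an invertible real matrix of determinant 1, to the block diagonal matrix with diagonal blocks A, [[0,-I],[-I,0]] (of size 2g) and C; that is, there exists a real matrix P with det P = 1 such that Pᵀ · M · P equals this block diagonal matrix. -/

import Mathlib

open Matrix

private lemma myFromColumns_add {m n₁ n₂ : Type*} (A₁ B₁ : Matrix m n₁ ℝ) (A₂ B₂ : Matrix m n₂ ℝ) :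
    Matrix.fromCols A₁ A₂ + Matrix.fromCols B₁ B₂ =
      Matrix.fromCols (A₁ + B₁) (A₂ + B₂) := by
  ext _ (_ | _) <;> simp

private lemma myFromRows_add {m₁ m₂ n : Type*} (A₁ B₁ : Matrix m₁ n ℝ) (A₂ B₂ : Matrix m₂ n ℝ) :
    Matrix.fromRows A₁ A₂ + Matrix.fromRows B₁ B₂ =
      Matrix.fromRows (A₁ + B₁) (A₂ + B₂) := by
  ext (_ | _) _ <;> simp

private lemma myFromBlocks_add {m₁ m₂ n₁ n₂ : Type*}
    (A₁ B₁ : Matrix m₁ n₁ ℝ) (A₂ B₂ : Matrix m₁ n₂ ℝ)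
    (A₃ B₃ : Matrix m₂ n₁ ℝ) (A₄ B₄ : Matrix m₂ n₂ ℝ) :
    Matrix.fromBlocks A₁ A₂ A₃ A₄ + Matrix.fromBlocks B₁ B₂ B₃ B₄ =
      Matrix.fromBlocks (A₁ + B₁) (A₂ + B₂) (A₃ + B₃) (A₄ + B₄) := by
  ext (_ | _) (_ | _) <;> simp


private lemma myFromColumns_fromRows_zero {m₁ m₂ n₁ n₂ : Type*}
    (A₁ : Matrix m₁ n₁ ℝ) (A₂ : Matrix m₂ n₁ ℝ) :
    Matrix.fromCols (Matrix.fromRows A₁ A₂) (0 : Matrix (m₁ ⊕ m₂) n₂ ℝ) =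
      Matrix.fromBlocks A₁ 0 A₂ 0 := by
  ext (_ | _) (_ | _) <;> simp

/-- The congruence in the proof of Proposition 3.8 ([CL, Proposition 13]): the glued linking
matrix `M = [[A, Bᵀ, 0, 0], [B, B·A⁻¹·Bᵀ, -I, 0], [0, -I, D·C⁻¹·Dᵀ, D], [0, 0, Dᵀ, C]]` is
congruent, via an invertible matrix `P` of determinant `1`, to the block diagonal matrix with
blocks `A`, `[[0, -I], [-I, 0]]` (of size `2g`) and `C`. -/

theorem glued_linking_matrix_congruent (n₁ n₂ g : ℕ)
    (A : Matrix (Fin n₁) (Fin n₁) ℝ) (hA : A.IsSymm) (hAinv : IsUnit A.det)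
    (C : Matrix (Fin n₂) (Fin n₂) ℝ) (hC : C.IsSymm) (hCinv : IsUnit C.det)
    (B : Matrix (Fin g) (Fin n₁) ℝ) (D : Matrix (Fin g) (Fin n₂) ℝ)
    (M : Matrix (Fin n₁ ⊕ (Fin g ⊕ (Fin g ⊕ Fin n₂)))
      (Fin n₁ ⊕ (Fin g ⊕ (Fin g ⊕ Fin n₂))) ℝ)
    (hMdef : M = Matrix.fromBlocks A
      (Matrix.fromCols Bᵀ (Matrix.fromCols 0 0))
      (Matrix.fromRows B (Matrix.fromRows 0 0))
      (Matrix.fromBlocks (B * A⁻¹ * Bᵀ)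
        (Matrix.fromCols (-1) 0)
        (Matrix.fromRows (-1) 0)
        (Matrix.fromBlocks (D * C⁻¹ * Dᵀ) D Dᵀ C))) :
    ∃ P : Matrix (Fin n₁ ⊕ (Fin g ⊕ (Fin g ⊕ Fin n₂)))
        (Fin n₁ ⊕ (Fin g ⊕ (Fin g ⊕ Fin n₂))) ℝ,
      P.det = 1 ∧
      Pᵀ * M * P = Matrix.fromBlocks A 0 0
        (Matrix.fromBlocks 0
          (Matrix.fromCols (-1) 0)
          (Matrix.fromRows (-1) 0)
          (Matrix.fromBlocks 0 0 0 C)) := by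
  have hAA : A * A⁻¹ = 1 := mul_nonsing_inv A hAinv
  have hCC : C * C⁻¹ = 1 := mul_nonsing_inv C hCinv
  have hAs : A⁻¹ᵀ = A⁻¹ := by rw [transpose_nonsing_inv, hA.eq]
  have hCs : C⁻¹ᵀ = C⁻¹ := by rw [transpose_nonsing_inv, hC.eq]
  refine ⟨Matrix.fromBlocks 1
      (Matrix.fromCols (-(A⁻¹ * Bᵀ)) (Matrix.fromCols 0 0)) 0
      (Matrix.fromBlocks 1 0 0
        (Matrix.fromBlocks 1 0 (-(C⁻¹ * Dᵀ)) 1)), ?_, ?_⟩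
  · rw [Matrix.det_fromBlocks_zero₂₁, Matrix.det_fromBlocks_zero₂₁,
      Matrix.det_fromBlocks_zero₁₂]
    simp
  · have hAB : A * (A⁻¹ * Bᵀ) = Bᵀ := by rw [← Matrix.mul_assoc, hAA, Matrix.one_mul]
    have hBA : B * A⁻¹ * A = B := by
      rw [Matrix.mul_assoc, nonsing_inv_mul A hAinv, Matrix.mul_one]
    have hDC : D * C⁻¹ * C = D := by
      rw [Matrix.mul_assoc, nonsing_inv_mul C hCinv, Matrix.mul_one]
    have hCD : C * (C⁻¹ * Dᵀ) = Dᵀ := by rw [← Matrix.mul_assoc, hCC, Matrix.one_mul]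
    subst hMdef
    simp only [Matrix.fromBlocks_transpose, Matrix.transpose_fromCols,
      Matrix.transpose_fromRows, Matrix.transpose_neg, Matrix.transpose_mul,
      Matrix.transpose_one, Matrix.transpose_zero, Matrix.fromBlocks_multiply,
      Matrix.fromRows_mul, Matrix.mul_fromCols, Matrix.fromCols_mul_fromRows,
      Matrix.fromRows_mul_fromCols, Matrix.fromCols_mul_fromBlocks,
      Matrix.fromBlocks_mul_fromRows, hAs, hCs, hAB, hBA, hDC, hCD,
      Matrix.mul_one, Matrix.one_mul, Matrix.mul_zero, Matrix.zero_mul,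
      Matrix.neg_mul, Matrix.mul_neg, neg_neg, add_zero, zero_add, neg_zero,
      neg_add_cancel, add_neg_cancel, Matrix.fromRows_zero, Matrix.fromCols_zero,
      Matrix.fromRows_fromCols_eq_fromBlocks, Matrix.transpose_transpose,
      myFromColumns_add, myFromRows_add, myFromBlocks_add, myFromColumns_fromRows_zero]
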